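/- Let μ be a stationary distribution of a PIN model whose interaction pattern is the complete directed graph on n ≥ 2 nodes (all ordered pairs of distinct nodes are links). Suppose V : ℝ^𝒜 → ℝ is twice continuously differentiable and ∇V(θ)·D̄(θ) ≤ 0 for all θ ∈ P(𝒜). Then there exists a constant C > 0 depending only on V such that for every δ > 0, μ({x ∈ 𝒳 : ∇V(θ(x))·D̄(θ(x)) > −δ}) ≥ 1 − C/(nδ). -/

import Mathlib

open Finset Filter

noncomputable section

/-- The empirical type (state frequencies) of a configuration. -/
def confType {V A : Type*} [Fintype V] [DecidableEq A] (x : V → A) (i : A) : ℝ :=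
  ((Finset.univ.filter fun v => x v = i).card : ℝ) / (Fintype.card V : ℝ)

/-- The boundary (empirical link-pair frequencies) of a configuration. -/
def boundary {V A : Type*} [DecidableEq A] (E : Finset (V × V)) (x : V → A) (i j : A) : ℝ :=
  ((E.filter fun e => x e.1 = i ∧ x e.2 = j).card : ℝ) / (E.card : ℝ)

/-- Off-diagonal part of the PIN transition matrix. -/
def Toff {V A : Type*} [Fintype V] [DecidableEq V] [DecidableEq A]
    (E : Finset (V × V)) (ρ : ℝ) (P : A → A → ℝ) (φ : A → A → A → ℝ) (x y : V → A) : ℝ :=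
  if (Finset.univ.filter fun v => x v ≠ y v).card = 1 then
    ∑ u ∈ Finset.univ.filter fun v => x v ≠ y v,
      ((1 - ρ) * (1 / (Fintype.card V : ℝ)) * P (x u) (y u)
        + (ρ / (E.card : ℝ)) * ∑ e ∈ E.filter fun e => e.1 = u, φ (x u) (y u) (x e.2))
  else 0

/-- The PIN transition matrix. -/
def pinTrans {V A : Type*} [Fintype V] [DecidableEq V] [Fintype A] [DecidableEq A]
    (E : Finset (V × V)) (ρ : ℝ) (P : A → A → ℝ) (φ : A → A → A → ℝ) (x y : V → A) : ℝ :=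
  if x = y then 1 - ∑ z : V → A, Toff E ρ P φ x z else Toff E ρ P φ x y

/-- The mean drift of the PIN model. -/
def meanDrift {V A : Type*} [Fintype V] [DecidableEq V] [Fintype A] [DecidableEq A]
    (E : Finset (V × V)) (ρ : ℝ) (P : A → A → ℝ) (φ : A → A → A → ℝ) (x : V → A) (i : A) : ℝ :=
  (Fintype.card V : ℝ) * ∑ y : V → A, pinTrans E ρ P φ x y * (confType y i - confType x i)

/-- The limit drift of the PIN model. -/
def limitDrift {A : Type*} [Fintype A] (ρ : ℝ) (P : A → A → ℝ) (φ : A → A → A → ℝ)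
    (θ : A → ℝ) (i : A) : ℝ :=
  ((1 - ρ) * ∑ j, P j i * θ j) + (ρ * ∑ ℓ, θ ℓ * ∑ j, φ j i ℓ * θ j) - θ i

/-- The linear operator Q acting on boundaries. -/
def Qop {A : Type*} [Fintype A] (φ : A → A → A → ℝ) (ξ : A → A → ℝ) (i : A) : ℝ :=
  (∑ ℓ, ∑ j, ξ j ℓ * φ j i ℓ) - ∑ ℓ, ξ i ℓ

/-- Membership in the probability simplex over `A`. -/
def inSimplex {A : Type*} [Fintype A] (θ : A → ℝ) : Prop :=
  (∀ i, 0 ≤ θ i) ∧ ∑ i, θ i = 1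

/-- The hypotheses on the parameters of a PIN model: `ρ ∈ [0,1]`, `P` and each `φ(ℓ)`
row-stochastic and nonnegative, the interaction graph nonempty and without self-loops. -/
def IsPinModel {V A : Type*} [Fintype A] (E : Finset (V × V)) (ρ : ℝ)
    (P : A → A → ℝ) (φ : A → A → A → ℝ) : Prop :=
  0 ≤ ρ ∧ ρ ≤ 1 ∧ (∀ i j, 0 ≤ P i j) ∧ (∀ i, ∑ j, P i j = 1) ∧
    (∀ i j ℓ, 0 ≤ φ i j ℓ) ∧ (∀ i ℓ, ∑ j, φ i j ℓ = 1) ∧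
    E.Nonempty ∧ ∀ e ∈ E, e.1 ≠ e.2

/-- Stationary distribution of a PIN model. -/
def IsStationaryPIN {V A : Type*} [Fintype V] [DecidableEq V] [Fintype A] [DecidableEq A]
    (E : Finset (V × V)) (ρ : ℝ) (P : A → A → ℝ) (φ : A → A → A → ℝ)
    (μ : (V → A) → ℝ) : Prop :=
  (∀ x, 0 ≤ μ x) ∧ (∑ x : V → A, μ x = 1) ∧
    ∀ y : V → A, ∑ x : V → A, μ x * pinTrans E ρ P φ x y = μ y

/-- The total mixing gap of a graph. -/
def mixingGap {V : Type*} [Fintype V] [DecidableEq V] (E : Finset (V × V)) : ℝ :=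
  sSup {w : ℝ | ∃ S U : Finset V, Disjoint S U ∧
    w = |((E.filter fun e => e.1 ∈ S ∧ e.2 ∈ U).card : ℝ) / (E.card : ℝ) -
      ((S.card : ℝ) * (U.card : ℝ)) / ((Fintype.card V : ℝ) * ((Fintype.card V : ℝ) - 1))|}

open Classical in
/-- Total `μ`-mass of the set of configurations satisfying `p`. -/
def massOf {X : Type*} [Fintype X] (μ : X → ℝ) (p : X → Prop) : ℝ :=
  ∑ x, if p x then μ x else 0

section comb
variable {V A : Type*} [Fintype V] [DecidableEq V] [Fintype A] [DecidableEq A]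
variable (E : Finset (V × V)) (ρ : ℝ) (P : A → A → ℝ) (φ : A → A → A → ℝ)

/-- single-site transition weight -/
def wgt (x : V → A) (u : V) (j : A) : ℝ :=
  (1 - ρ) * (1 / (Fintype.card V : ℝ)) * P (x u) j
    + (ρ / (E.card : ℝ)) * ∑ e ∈ E.filter fun e => e.1 = u, φ (x u) j (x e.2)

variable {E ρ P φ}

lemma diffset_update (x : V → A) (u : V) {j : A} (hj : j ≠ x u) :
    (Finset.univ.filter fun v => x v ≠ Function.update x u j v) = {u} := by
  ext v
  simp only [mem_filter, mem_univ, true_and, mem_singleton]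
  by_cases h : v = u
  · subst h; simp [Function.update_self, Ne.symm hj]
  · simp [Function.update_of_ne h, h]

lemma Toff_self (x : V → A) : Toff E ρ P φ x x = 0 := by
  simp [Toff]

lemma Toff_update (x : V → A) (u : V) {j : A} (hj : j ≠ x u) :
    Toff E ρ P φ x (Function.update x u j) = wgt E ρ P φ x u j := by
  rw [Toff, diffset_update x u hj]
  simp [wgt, Function.update_self]

lemma update_injOn (x : V → A) :
    ∀ p ∈ (univ ×ˢ univ : Finset (V × A)).filter (fun p => p.2 ≠ x p.1),
    ∀ q ∈ (univ ×ˢ univ : Finset (V × A)).filter (fun p => p.2 ≠ x p.1),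
    (fun p : V × A => Function.update x p.1 p.2) p = (fun p : V × A => Function.update x p.1 p.2) q → p = q := by
  rintro ⟨u, j⟩ hp ⟨u', j'⟩ hq h
  simp only [mem_filter] at hp hq
  have h' : Function.update x u j = Function.update x u' j' := h
  have hu : u = u' := by
    by_contra hne
    have := congrFun h' u
    rw [Function.update_self, Function.update_of_ne hne] at this
    exact hp.2 this
  subst hu
  have := congrFun h' u
  rw [Function.update_self, Function.update_self] at this
  simp [this]

lemma offdiag_sum (x : V → A) (h : (V → A) → ℝ) (hx : h x = 0) :
    ∑ y : V → A, Toff E ρ P φ x y * h y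
      = ∑ u : V, ∑ j : A, wgt E ρ P φ x u j * h (Function.update x u j) := by
  classical
  set T : Finset (V × A) := (univ ×ˢ univ).filter (fun p => p.2 ≠ x p.1) with hT
  have himg : ∀ y : V → A, y ∈ (univ : Finset (V → A)) →
      y ∉ T.image (fun p : V × A => Function.update x p.1 p.2) → Toff E ρ P φ x y * h y = 0 := by
    intro y _ hy
    by_contra hne
    have htoff : Toff E ρ P φ x y ≠ 0 := fun h0 => hne (by rw [h0, zero_mul])
    have hcard : (Finset.univ.filter fun v => x v ≠ y v).card = 1 := by
      by_contra hc; exact htoff (by rw [Toff, if_neg hc])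
    obtain ⟨v, hv⟩ := Finset.card_eq_one.mp hcard
    have hvmem : v ∈ Finset.univ.filter fun v => x v ≠ y v := by rw [hv]; exact mem_singleton_self v
    have hxv : x v ≠ y v := (mem_filter.mp hvmem).2
    have hyeq : y = Function.update x v (y v) := by
      funext w
      by_cases hw : w = v
      · subst hw; rw [Function.update_self]
      · rw [Function.update_of_ne hw]
        by_contra hxw
        have : w ∈ Finset.univ.filter fun v' => x v' ≠ y v' := by
          simp only [mem_filter, mem_univ, true_and]
          exact fun a => hxw a.symm
        rw [hv] at this
        exact hw (mem_singleton.mp this)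
    apply hy
    refine Finset.mem_image.mpr ⟨(v, y v), ?_, hyeq.symm⟩
    simp [hT, Ne.symm hxv]
  rw [← Finset.sum_subset (Finset.subset_univ (T.image fun p : V × A => Function.update x p.1 p.2)) himg]
  rw [Finset.sum_image (update_injOn x)]
  have hTsum : ∑ p ∈ T, Toff E ρ P φ x (Function.update x p.1 p.2) * h (Function.update x p.1 p.2)
      = ∑ p ∈ T, wgt E ρ P φ x p.1 p.2 * h (Function.update x p.1 p.2) := by
    refine Finset.sum_congr rfl fun p hp => ?_
    rw [Toff_update x p.1 ((mem_filter.mp hp).2)]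
  rw [hTsum]
  rw [← Finset.sum_product']
  rw [← Finset.sum_filter_add_sum_filter_not (univ ×ˢ univ) (fun p : V × A => p.2 ≠ x p.1)
    (fun p => wgt E ρ P φ x p.1 p.2 * h (Function.update x p.1 p.2))]
  have hzero : ∑ p ∈ (univ ×ˢ univ : Finset (V × A)).filter (fun p => ¬ p.2 ≠ x p.1),
      wgt E ρ P φ x p.1 p.2 * h (Function.update x p.1 p.2) = 0 := by
    refine Finset.sum_eq_zero fun p hp => ?_
    have : p.2 = x p.1 := not_not.mp (mem_filter.mp hp).2
    rw [this, Function.update_eq_self, hx, mul_zero]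
  rw [hzero, add_zero]

end comb

section comb2
variable {V A : Type*} [Fintype V] [DecidableEq V] [Fintype A] [DecidableEq A]

lemma card_filter_real (x : V → A) (i : A) :
    ((Finset.univ.filter fun v => x v = i).card : ℝ) = ∑ v : V, (if x v = i then (1:ℝ) else 0) := by
  rw [Finset.sum_boole]

lemma fiber_sum (x : V → A) (f : A → ℝ) :
    ∑ u : V, f (x u) = ∑ j : A, ((Finset.univ.filter fun v => x v = j).card : ℝ) * f j := by
  rw [← Finset.sum_fiberwise (univ : Finset V) x (fun u => f (x u))]
  refine Finset.sum_congr rfl fun j _ => ?_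
  rw [Finset.sum_congr rfl (fun u hu => by rw [(Finset.mem_filter.mp hu).2]),
    Finset.sum_const, nsmul_eq_mul]

lemma fiber_sum_edge (E : Finset (V × V)) (g : A → A → ℝ) (x : V → A) :
    ∑ e ∈ E, g (x e.1) (x e.2)
      = ∑ j : A, ∑ ℓ : A, ((E.filter fun e => x e.1 = j ∧ x e.2 = ℓ).card : ℝ) * g j ℓ := by
  rw [← Finset.sum_fiberwise E (fun e => (x e.1, x e.2)) (fun e => g (x e.1) (x e.2))]
  rw [← Fintype.sum_prod_type']
  refine Finset.sum_congr rfl fun p _ => ?_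
  have : (E.filter fun e => (x e.1, x e.2) = p) = E.filter fun e => x e.1 = p.1 ∧ x e.2 = p.2 := by
    refine Finset.filter_congr fun e _ => ?_
    rw [Prod.ext_iff]
  rw [this, Finset.sum_congr rfl (fun e he => by
    obtain ⟨_, h1, h2⟩ := Finset.mem_filter.mp he
    rw [h1, h2]), Finset.sum_const, nsmul_eq_mul]

lemma fiber_sum_fst (E : Finset (V × V)) (g : V × V → ℝ) :
    ∑ u : V, ∑ e ∈ E.filter fun e => e.1 = u, g e = ∑ e ∈ E, g e :=
  Finset.sum_fiberwise E Prod.fst g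

lemma confType_update (hn : 0 < Fintype.card V) (x : V → A) (u : V) (j i : A) :
    confType (Function.update x u j) i
      = confType x i + ((if j = i then (1:ℝ) else 0) - (if x u = i then 1 else 0)) / (Fintype.card V : ℝ) := by
  have hN : (Fintype.card V : ℝ) ≠ 0 := by positivity
  rw [confType, confType, card_filter_real, card_filter_real, ← add_div]
  congr 1
  have hfun : ∀ v : V, (if Function.update x u j v = i then (1:ℝ) else 0)
      = Function.update (fun v => if x v = i then (1:ℝ) else 0) u (if j = i then 1 else 0) v := by
    intro v
    by_cases hv : v = u
    · subst hv; rw [Function.update_self, Function.update_self]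
    · rw [Function.update_of_ne hv, Function.update_of_ne hv]
  rw [Finset.sum_congr rfl fun v _ => hfun v,
    Finset.sum_update_of_mem (Finset.mem_univ u)]
  have : ∑ v ∈ (univ : Finset V) \ {u}, (if x v = i then (1:ℝ) else 0)
      = (∑ v : V, if x v = i then (1:ℝ) else 0) - (if x u = i then 1 else 0) := by
    rw [Finset.sum_sdiff_eq_sub (Finset.singleton_subset_iff.mpr (Finset.mem_univ u)),
      Finset.sum_singleton]
  rw [this]; ring

lemma confType_simplex (hn : 0 < Fintype.card V) (x : V → A) : inSimplex (confType x) := by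
  constructor
  · intro i; exact div_nonneg (Nat.cast_nonneg _) (Nat.cast_nonneg _)
  · have : ∑ i : A, ((Finset.univ.filter fun v => x v = i).card : ℝ) = (Fintype.card V : ℝ) := by
      rw [← Nat.cast_sum]
      norm_cast
      exact (Finset.card_eq_sum_card_fiberwise (f := x) (s := univ) (t := univ)
        (fun v _ => Finset.mem_univ _)).symm
    simp only [confType, ← Finset.sum_div, this]
    exact div_self (by positivity)

end comb2

section comb3
variable {V A : Type*} [Fintype V] [DecidableEq V] [Fintype A] [DecidableEq A]
variable {E : Finset (V × V)} {ρ : ℝ} {P : A → A → ℝ} {φ : A → A → A → ℝ}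

def driftVec (E : Finset (V × V)) (ρ : ℝ) (P : A → A → ℝ) (φ : A → A → A → ℝ)
    (x : V → A) (i : A) : ℝ :=
  (1 - ρ) * ((∑ j, P j i * confType x j) - confType x i) + ρ * Qop φ (boundary E x) i

lemma wgt_rowsum (hP : ∀ a, ∑ j, P a j = 1) (hφ : ∀ a ℓ, ∑ j, φ a j ℓ = 1)
    (x : V → A) (u : V) :
    ∑ j : A, wgt E ρ P φ x u j
      = (1 - ρ) * (1 / (Fintype.card V : ℝ))
        + (ρ / (E.card : ℝ)) * ((E.filter fun e => e.1 = u).card : ℝ) := by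
  simp only [wgt]
  rw [Finset.sum_add_distrib, ← Finset.mul_sum, ← Finset.mul_sum, hP]
  congr 1
  · rw [mul_one]
  · congr 1
    rw [Finset.sum_comm]
    rw [Finset.sum_congr rfl fun e he => hφ (x u) (x e.2), Finset.sum_const, nsmul_eq_mul, mul_one]

lemma deg_fiber (x : V → A) (i : A) :
    ∑ u : V, (if x u = i then ((E.filter fun e => e.1 = u).card : ℝ) else 0)
      = ((E.filter fun e => x e.1 = i).card : ℝ) := by
  have h1 : ∀ u : V, (if x u = i then ((E.filter fun e => e.1 = u).card : ℝ) else 0)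
      = ∑ e ∈ E.filter fun e => e.1 = u, (if x e.1 = i then (1:ℝ) else 0) := by
    intro u
    rw [Finset.sum_congr rfl (fun e he => by rw [(Finset.mem_filter.mp he).2])]
    rw [Finset.sum_const, nsmul_eq_mul]
    by_cases h : x u = i <;> simp [h]
  rw [Finset.sum_congr rfl fun u _ => h1 u, fiber_sum_fst, Finset.sum_boole]

lemma fst_fiber (x : V → A) (i : A) :
    ((E.filter fun e => x e.1 = i).card : ℝ)
      = ∑ ℓ : A, ((E.filter fun e => x e.1 = i ∧ x e.2 = ℓ).card : ℝ) := by
  rw [← Nat.cast_sum]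
  norm_cast
  rw [Finset.card_eq_sum_card_fiberwise (f := fun e => x e.2) (t := univ) (fun e _ => mem_univ _)]
  refine Finset.sum_congr rfl fun ℓ _ => ?_
  rw [Finset.filter_filter]

lemma drift_formula (hn : 0 < Fintype.card V) (hm : 0 < E.card)
    (hP : ∀ a, ∑ j, P a j = 1) (hφ : ∀ a ℓ, ∑ j, φ a j ℓ = 1) (x : V → A) (i : A) :
    ∑ u : V, ∑ j : A, wgt E ρ P φ x u j * (confType (Function.update x u j) i - confType x i)
      = driftVec E ρ P φ x i / (Fintype.card V : ℝ) := by
  have hN : (Fintype.card V : ℝ) ≠ 0 := by positivity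
  have hM : ((E.card : ℝ)) ≠ 0 := by positivity
  -- rewrite the increments
  have step1 : ∀ u j, confType (Function.update x u j) i - confType x i
      = ((if j = i then (1:ℝ) else 0) - (if x u = i then 1 else 0)) / (Fintype.card V : ℝ) := by
    intro u j; rw [confType_update hn]; ring
  simp only [step1]
  have split : ∀ u j, wgt E ρ P φ x u j *
      (((if j = i then (1:ℝ) else 0) - (if x u = i then 1 else 0)) / (Fintype.card V : ℝ))
      = ((if j = i then wgt E ρ P φ x u j else 0)
          - (if x u = i then wgt E ρ P φ x u j else 0)) / (Fintype.card V : ℝ) := by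
    intro u j
    by_cases h1 : j = i <;> by_cases h2 : x u = i <;> simp [h1, h2] <;> ring
  simp only [split]
  simp only [← Finset.sum_div]
  congr 1
  simp only [Finset.sum_sub_distrib]
  -- now pure sums
  have S1 : ∑ u : V, ∑ j : A, (if j = i then wgt E ρ P φ x u j else 0)
      = ∑ u : V, wgt E ρ P φ x u i := by
    refine Finset.sum_congr rfl fun u _ => ?_
    simp
  have S2 : ∑ u : V, ∑ j : A, (if x u = i then wgt E ρ P φ x u j else 0)
      = ∑ u : V, (if x u = i then ((1 - ρ) * (1 / (Fintype.card V : ℝ))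
          + (ρ / (E.card : ℝ)) * ((E.filter fun e => e.1 = u).card : ℝ)) else 0) := by
    refine Finset.sum_congr rfl fun u _ => ?_
    by_cases h : x u = i <;> simp [h, wgt_rowsum hP hφ]
  rw [S1, S2]
  -- expand S1
  have S1' : ∑ u : V, wgt E ρ P φ x u i
      = (1 - ρ) * (1 / (Fintype.card V : ℝ))
          * (∑ j : A, ((Finset.univ.filter fun v => x v = j).card : ℝ) * P j i)
        + (ρ / (E.card : ℝ)) * ∑ j : A, ∑ ℓ : A,
            ((E.filter fun e => x e.1 = j ∧ x e.2 = ℓ).card : ℝ) * φ j i ℓ := by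
    simp only [wgt]
    rw [Finset.sum_add_distrib, ← Finset.mul_sum, ← Finset.mul_sum]
    congr 1
    · rw [fiber_sum x (fun a => P a i)]
    · congr 1
      have : ∑ u : V, ∑ e ∈ E.filter fun e => e.1 = u, φ (x u) i (x e.2)
          = ∑ u : V, ∑ e ∈ E.filter fun e => e.1 = u, φ (x e.1) i (x e.2) := by
        refine Finset.sum_congr rfl fun u _ => Finset.sum_congr rfl fun e he => ?_
        rw [(Finset.mem_filter.mp he).2]
      rw [this, fiber_sum_fst E (fun e => φ (x e.1) i (x e.2)),
        fiber_sum_edge E (fun j ℓ => φ j i ℓ) x]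
  -- expand S2
  have S2' : ∑ u : V, (if x u = i then ((1 - ρ) * (1 / (Fintype.card V : ℝ))
          + (ρ / (E.card : ℝ)) * ((E.filter fun e => e.1 = u).card : ℝ)) else 0)
      = (1 - ρ) * (1 / (Fintype.card V : ℝ)) * ((Finset.univ.filter fun v => x v = i).card : ℝ)
        + (ρ / (E.card : ℝ)) * ∑ ℓ : A, ((E.filter fun e => x e.1 = i ∧ x e.2 = ℓ).card : ℝ) := by
    have expand : ∀ u : V, (if x u = i then ((1 - ρ) * (1 / (Fintype.card V : ℝ))
          + (ρ / (E.card : ℝ)) * ((E.filter fun e => e.1 = u).card : ℝ)) else 0)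
        = (if x u = i then ((1 - ρ) * (1 / (Fintype.card V : ℝ))) else 0)
          + (ρ / (E.card : ℝ)) * (if x u = i then ((E.filter fun e => e.1 = u).card : ℝ) else 0) := by
      intro u; by_cases h : x u = i <;> simp [h]
    simp only [expand]
    rw [Finset.sum_add_distrib, ← Finset.mul_sum, deg_fiber, fst_fiber]
    congr 1
    have h2 : ∀ u : V, (if x u = i then ((1 - ρ) * (1 / (Fintype.card V : ℝ))) else 0)
        = ((1 - ρ) * (1 / (Fintype.card V : ℝ))) * (if x u = i then (1:ℝ) else 0) := by
      intro u; by_cases h : x u = i <;> simp [h]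
    simp only [h2]
    rw [← Finset.mul_sum, Finset.sum_boole]
  rw [S1', S2']
  -- final algebra
  rw [driftVec, Qop]
  have e1 : ∑ j, P j i * confType x j
      = (∑ j : A, ((Finset.univ.filter fun v => x v = j).card : ℝ) * P j i) / (Fintype.card V : ℝ) := by
    rw [Finset.sum_div]
    refine Finset.sum_congr rfl fun j _ => ?_
    rw [confType]; ring
  have e2 : ∑ ℓ, ∑ j, boundary E x j ℓ * φ j i ℓ
      = (∑ j : A, ∑ ℓ : A, ((E.filter fun e => x e.1 = j ∧ x e.2 = ℓ).card : ℝ) * φ j i ℓ)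
          / (E.card : ℝ) := by
    rw [Finset.sum_comm, Finset.sum_div]
    refine Finset.sum_congr rfl fun j _ => ?_
    rw [Finset.sum_div]
    refine Finset.sum_congr rfl fun ℓ _ => ?_
    rw [boundary]; ring
  have e3 : ∑ ℓ, boundary E x i ℓ
      = (∑ ℓ : A, ((E.filter fun e => x e.1 = i ∧ x e.2 = ℓ).card : ℝ)) / (E.card : ℝ) := by
    rw [Finset.sum_div]
    refine Finset.sum_congr rfl fun ℓ _ => ?_
    rw [boundary]
  rw [e1, e2, e3, confType]
  field_simp
  ring

end comb3

section complete
variable {V A : Type*} [Fintype V] [DecidableEq V] [Fintype A] [DecidableEq A]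

lemma diag_card_gen (s : Finset V) :
    ((univ ×ˢ univ : Finset (V × V)).filter fun e => e.1 = e.2 ∧ e.1 ∈ s).card = s.card := by
  rw [← Finset.card_image_of_injective s (f := fun v : V => (v, v)) (fun a b h => (Prod.ext_iff.mp h).1)]
  congr 1
  ext ⟨a, b⟩
  simp only [Finset.mem_filter, Finset.mem_image, Finset.mem_product, mem_univ, true_and, and_true]
  constructor
  · rintro ⟨rfl, hb⟩; exact ⟨a, hb, rfl⟩
  · rintro ⟨v, hv, h⟩; obtain ⟨h1, h2⟩ := Prod.ext_iff.mp h; subst h1; subst h2; exact ⟨rfl, hv⟩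

lemma cardE_complete (hE : (univ.filter fun e : V × V => e.1 ≠ e.2) = (univ.filter fun e : V × V => e.1 ≠ e.2)) : True := trivial

variable (x : V → A)

lemma fib_card_complete (j ℓ : A) :
    ((((univ : Finset (V × V)).filter fun e : V × V => e.1 ≠ e.2).filter
        fun e => x e.1 = j ∧ x e.2 = ℓ).card : ℝ)
      = ((univ.filter fun v => x v = j).card : ℝ) * ((univ.filter fun v => x v = ℓ).card : ℝ)
        - (if j = ℓ then ((univ.filter fun v => x v = j).card : ℝ) else 0) := by
  classical
  set F : Finset (V × V) := (univ : Finset (V × V)).filter fun e => x e.1 = j ∧ x e.2 = ℓ with hF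
  have hsub : (((univ : Finset (V × V)).filter fun e : V × V => e.1 ≠ e.2).filter
      fun e => x e.1 = j ∧ x e.2 = ℓ) = F.filter fun e => ¬ e.1 = e.2 := by
    rw [Finset.filter_filter, Finset.filter_filter]
    exact Finset.filter_congr fun e _ => by tauto
  have hcards : (F.filter fun e => e.1 = e.2).card + (F.filter fun e => ¬ e.1 = e.2).card = F.card :=
    Finset.card_filter_add_card_filter_not _
  have hFcard : F.card = (univ.filter fun v => x v = j).card * (univ.filter fun v => x v = ℓ).card := by
    rw [hF, ← Finset.univ_product_univ, Finset.filter_product (fun v => x v = j) (fun v => x v = ℓ), Finset.card_product]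
  have hdiag : (F.filter fun e => e.1 = e.2).card
      = (if j = ℓ then (univ.filter fun v => x v = j).card else 0) := by
    have : F.filter (fun e => e.1 = e.2) = (univ ×ˢ univ : Finset (V × V)).filter
        fun e => e.1 = e.2 ∧ e.1 ∈ univ.filter fun v => x v = j ∧ x v = ℓ := by
      rw [hF, ← Finset.univ_product_univ, Finset.filter_filter]
      refine Finset.filter_congr fun e _ => ?_
      simp only [Finset.mem_filter, mem_univ, true_and]
      constructor
      · rintro ⟨⟨h1, h2⟩, h3⟩; exact ⟨h3, h1, by rw [h3]; exact h2⟩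
      · rintro ⟨h3, h1, h2⟩; exact ⟨⟨h1, by rw [← h3]; exact h2⟩, h3⟩
    rw [this, diag_card_gen]
    by_cases h : j = ℓ
    · subst h; simp
    · have : (univ.filter fun v => x v = j ∧ x v = ℓ) = ∅ := by
        refine Finset.filter_false_of_mem fun v _ => ?_
        rintro ⟨h1, h2⟩; exact h (h1 ▸ h2 ▸ rfl)
      rw [this]; simp [h]
  rw [hsub]
  have := congrArg (fun k : ℕ => (k : ℝ)) hcards
  push_cast at this
  rw [hdiag, hFcard] at hcards
  have h2 := congrArg (fun k : ℕ => (k : ℝ)) hcards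
  push_cast at h2
  by_cases h : j = ℓ
  · simp only [if_pos h] at h2 ⊢; linarith
  · simp only [if_neg h] at h2 ⊢; push_cast at h2; linarith

lemma diag_card' :
    ((univ : Finset (V × V)).filter fun e : V × V => e.1 = e.2).card = Fintype.card V := by
  have : ((univ : Finset (V × V)).filter fun e : V × V => e.1 = e.2)
      = (univ ×ˢ univ : Finset (V × V)).filter fun e => e.1 = e.2 ∧ e.1 ∈ (univ : Finset V) := by
    rw [Finset.univ_product_univ]
    exact Finset.filter_congr fun e _ => by simp
  rw [this, diag_card_gen, Finset.card_univ]

lemma cardE_complete' :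
    ((((univ : Finset (V × V)).filter fun e : V × V => e.1 ≠ e.2).card : ℝ))
      = (Fintype.card V : ℝ) * (Fintype.card V : ℝ) - (Fintype.card V : ℝ) := by
  have hcards : ((univ : Finset (V × V)).filter fun e : V × V => e.1 = e.2).card
      + ((univ : Finset (V × V)).filter fun e : V × V => ¬ e.1 = e.2).card
      = (univ : Finset (V × V)).card := Finset.card_filter_add_card_filter_not _
  rw [diag_card', Finset.card_univ, Fintype.card_prod] at hcards
  have h2 := congrArg (fun k : ℕ => (k : ℝ)) hcards
  push_cast at h2
  have : ((univ : Finset (V × V)).filter fun e : V × V => e.1 ≠ e.2)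
      = ((univ : Finset (V × V)).filter fun e : V × V => ¬ e.1 = e.2) := rfl
  rw [this]
  linarith

end complete

section close
variable {V A : Type*} [Fintype V] [DecidableEq V] [Fintype A] [DecidableEq A]
variable {ρ : ℝ} {P : A → A → ℝ} {φ : A → A → A → ℝ}

lemma boundary_rowsum_complete (hn : 2 ≤ Fintype.card V) (x : V → A) (i : A) :
    ∑ ℓ : A, boundary ((univ : Finset (V × V)).filter fun e : V × V => e.1 ≠ e.2) x i ℓ
      = confType x i := by
  have hN2 : (2 : ℝ) ≤ (Fintype.card V : ℝ) := by exact_mod_cast hn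
  have hN : (Fintype.card V : ℝ) ≠ 0 := by linarith
  have hm : (Fintype.card V : ℝ) * (Fintype.card V : ℝ) - (Fintype.card V : ℝ) ≠ 0 := by nlinarith
  simp only [boundary, cardE_complete']
  rw [← Finset.sum_div]
  rw [Finset.sum_congr rfl fun ℓ _ => fib_card_complete x i ℓ]
  rw [Finset.sum_sub_distrib, ← Finset.mul_sum]
  have h1 : ∑ ℓ : A, ((univ.filter fun v => x v = ℓ).card : ℝ) = (Fintype.card V : ℝ) := by
    rw [← Nat.cast_sum]
    norm_cast
    exact (Finset.card_eq_sum_card_fiberwise (f := x) (s := univ) (t := univ)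
      (fun v _ => Finset.mem_univ _)).symm
  have h2 : ∑ ℓ : A, (if i = ℓ then ((univ.filter fun v => x v = i).card : ℝ) else 0)
      = ((univ.filter fun v => x v = i).card : ℝ) := by
    rw [Finset.sum_ite_eq]; simp
  rw [h1, h2, confType]
  rw [div_eq_div_iff hm hN]
  ring

lemma boundary_close_complete (hn : 2 ≤ Fintype.card V) (x : V → A) (j ℓ : A) :
    |boundary ((univ : Finset (V × V)).filter fun e : V × V => e.1 ≠ e.2) x j ℓ
      - confType x j * confType x ℓ| ≤ 4 / (Fintype.card V : ℝ) := by
  have hN2 : (2 : ℝ) ≤ (Fintype.card V : ℝ) := by exact_mod_cast hn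
  have hN : (Fintype.card V : ℝ) ≠ 0 := by linarith
  set N := (Fintype.card V : ℝ) with hNdef
  set a := ((univ.filter fun v => x v = j).card : ℝ) with ha
  set b := ((univ.filter fun v => x v = ℓ).card : ℝ) with hb
  set c := (if j = ℓ then a else 0) with hc
  have hA : 0 ≤ a := Nat.cast_nonneg _
  have hB : 0 ≤ b := Nat.cast_nonneg _
  have haN : a ≤ N := by rw [ha, hNdef]; exact_mod_cast Finset.card_filter_le _ _
  have hbN : b ≤ N := by rw [hb, hNdef]; exact_mod_cast Finset.card_filter_le _ _
  have hC : 0 ≤ c ∧ c ≤ N := by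
    rw [hc]; by_cases h : j = ℓ <;> simp [h] <;> [exact ⟨hA, haN⟩; linarith]
  rw [boundary, cardE_complete', fib_card_complete x j ℓ, confType, confType]
  rw [← hNdef, ← ha, ← hb, ← hc]
  have key : (a * b - c) / (N * N - N) - a / N * (b / N)
      = (a * b - c * N) / (N * N * (N - 1)) := by
    have h1 : N * N - N ≠ 0 := by nlinarith
    have h2 : N - 1 ≠ 0 := by intro h; nlinarith [h]
    field_simp
    ring
  rw [key, abs_div, abs_of_pos (by nlinarith : (0:ℝ) < N * N * (N - 1))]
  rw [div_le_div_iff₀ (by nlinarith) (by linarith)]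
  have habs : |a * b - c * N| ≤ N * N := by
    rw [abs_le]
    constructor <;> nlinarith [hC.1, hC.2]
  nlinarith [habs, abs_nonneg (a * b - c * N)]

lemma phi_le_one (hφ0 : ∀ i j ℓ, 0 ≤ φ i j ℓ) (hφ : ∀ a ℓ, ∑ j, φ a j ℓ = 1)
    (j i ℓ : A) : φ j i ℓ ≤ 1 := by
  rw [← hφ j ℓ]
  exact Finset.single_le_sum (fun k _ => hφ0 j k ℓ) (Finset.mem_univ i)

lemma drift_close (hn : 2 ≤ Fintype.card V) (hρ0 : 0 ≤ ρ) (hρ1 : ρ ≤ 1)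
    (hφ0 : ∀ i j ℓ, 0 ≤ φ i j ℓ) (hφ : ∀ a ℓ, ∑ j, φ a j ℓ = 1) (x : V → A) (i : A) :
    |driftVec ((univ : Finset (V × V)).filter fun e : V × V => e.1 ≠ e.2) ρ P φ x i
      - limitDrift ρ P φ (confType x) i|
      ≤ 4 * (Fintype.card A : ℝ)^2 / (Fintype.card V : ℝ) := by
  have hN2 : (2 : ℝ) ≤ (Fintype.card V : ℝ) := by exact_mod_cast hn
  set E := (univ : Finset (V × V)).filter fun e : V × V => e.1 ≠ e.2 with hE
  set θ := confType x with hθ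
  have e4 : ∑ ℓ, θ ℓ * ∑ j, φ j i ℓ * θ j
      = ∑ ℓ, ∑ j, (θ j * θ ℓ) * φ j i ℓ := by
    refine Finset.sum_congr rfl fun ℓ _ => ?_
    rw [Finset.mul_sum]
    exact Finset.sum_congr rfl fun j _ => by ring
  have e5 : ∑ ℓ, ∑ j, (boundary E x j ℓ - θ j * θ ℓ) * φ j i ℓ
      = (∑ ℓ, ∑ j, boundary E x j ℓ * φ j i ℓ) - ∑ ℓ, ∑ j, (θ j * θ ℓ) * φ j i ℓ := by
    simp only [sub_mul, Finset.sum_sub_distrib]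
  have key : driftVec E ρ P φ x i - limitDrift ρ P φ θ i
      = ρ * ∑ ℓ, ∑ j, (boundary E x j ℓ - θ j * θ ℓ) * φ j i ℓ := by
    rw [driftVec, limitDrift, Qop, boundary_rowsum_complete hn x i, ← hθ, e4, e5]
    ring
  rw [key, abs_mul, abs_of_nonneg hρ0]
  have hbd : |∑ ℓ, ∑ j, (boundary E x j ℓ - θ j * θ ℓ) * φ j i ℓ|
      ≤ (Fintype.card A : ℝ)^2 * (4 / (Fintype.card V : ℝ)) := by
    calc |∑ ℓ, ∑ j, (boundary E x j ℓ - θ j * θ ℓ) * φ j i ℓ|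
        ≤ ∑ ℓ, |∑ j, (boundary E x j ℓ - θ j * θ ℓ) * φ j i ℓ| :=
          Finset.abs_sum_le_sum_abs _ _
      _ ≤ ∑ ℓ : A, ∑ j : A, |(boundary E x j ℓ - θ j * θ ℓ) * φ j i ℓ| :=
          Finset.sum_le_sum fun ℓ _ => Finset.abs_sum_le_sum_abs _ _
      _ ≤ ∑ ℓ : A, ∑ j : A, (4 / (Fintype.card V : ℝ)) := by
          refine Finset.sum_le_sum fun ℓ _ => Finset.sum_le_sum fun j _ => ?_
          rw [abs_mul, abs_of_nonneg (hφ0 j i ℓ)]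
          calc |boundary E x j ℓ - θ j * θ ℓ| * φ j i ℓ
              ≤ (4 / (Fintype.card V : ℝ)) * 1 := by
                refine mul_le_mul (boundary_close_complete hn x j ℓ)
                  (phi_le_one hφ0 hφ j i ℓ) (hφ0 j i ℓ) (by positivity)
            _ = 4 / (Fintype.card V : ℝ) := mul_one _
      _ = (Fintype.card A : ℝ)^2 * (4 / (Fintype.card V : ℝ)) := by
          simp only [Finset.sum_const, nsmul_eq_mul, Finset.card_univ]
          ring
  calc ρ * |∑ ℓ, ∑ j, (boundary E x j ℓ - θ j * θ ℓ) * φ j i ℓ|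
      ≤ 1 * ((Fintype.card A : ℝ)^2 * (4 / (Fintype.card V : ℝ))) :=
        mul_le_mul hρ1 hbd (abs_nonneg _) (by norm_num)
    _ = 4 * (Fintype.card A : ℝ)^2 / (Fintype.card V : ℝ) := by ring

end close

section anal
variable {A : Type*} [Fintype A] [Nonempty A]

lemma simplex_mem_ball {θ : A → ℝ} (hθ : inSimplex θ) : θ ∈ Metric.closedBall (0 : A → ℝ) 1 := by
  rw [Metric.mem_closedBall, dist_zero_right]
  rw [pi_norm_le_iff_of_nonneg (by norm_num)]
  intro i
  rw [Real.norm_eq_abs, abs_of_nonneg (hθ.1 i)]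
  calc θ i ≤ ∑ j, θ j := Finset.single_le_sum (fun j _ => hθ.1 j) (Finset.mem_univ i)
    _ = 1 := hθ.2

lemma exists_bounds (W : (A → ℝ) → ℝ) (hW : ContDiff ℝ 2 W) :
    ∃ M L : ℝ, 0 ≤ M ∧ 0 ≤ L ∧
      (∀ θ ∈ Metric.closedBall (0 : A → ℝ) 1, ‖fderiv ℝ W θ‖ ≤ M) ∧
      (∀ a b : A → ℝ, a ∈ Metric.closedBall (0 : A → ℝ) 1 →
        b ∈ Metric.closedBall (0 : A → ℝ) 1 →
        |W b - W a - fderiv ℝ W a (b - a)| ≤ L * (‖b - a‖ * ‖b - a‖)) := by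
  have hK : IsCompact (Metric.closedBall (0 : A → ℝ) 1) := isCompact_closedBall _ _
  have hf1 : Continuous (fderiv ℝ W) := hW.continuous_fderiv (by norm_num)
  obtain ⟨M0, hM0⟩ := hK.exists_bound_of_continuousOn hf1.continuousOn
  have hf2 : ContDiff ℝ 1 (fderiv ℝ W) := hW.fderiv_right (by norm_num)
  have hc2 : Continuous (fderiv ℝ (fderiv ℝ W)) := hf2.continuous_fderiv one_ne_zero
  obtain ⟨L0, hL0⟩ := hK.exists_bound_of_continuousOn (f := fderiv ℝ (fderiv ℝ W)) hc2.continuousOn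
  refine ⟨max M0 0, max L0 0, le_max_right _ _, le_max_right _ _, ?_, ?_⟩
  · exact fun θ hθ => le_trans (hM0 θ hθ) (le_max_left _ _)
  · intro a b ha hb
    have hlip : ∀ z ∈ Metric.closedBall (0 : A → ℝ) 1,
        ‖fderiv ℝ W z - fderiv ℝ W a‖ ≤ max L0 0 * ‖z - a‖ :=
      fun z hz => Convex.norm_image_sub_le_of_norm_fderiv_le
        (fun w _ => (hf2.differentiable one_ne_zero) w)
        (fun w hw => le_trans (hL0 w hw) (le_max_left _ _))
        (convex_closedBall _ _) ha hz
    have hseg : segment ℝ a b ⊆ Metric.closedBall (0 : A → ℝ) 1 :=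
      (convex_closedBall _ _).segment_subset ha hb
    have key := Convex.norm_image_sub_le_of_norm_fderiv_le'
      (f := W) (s := segment ℝ a b) (φ := fderiv ℝ W a) (C := max L0 0 * ‖b - a‖)
      (fun z _ => (hW.differentiable (by norm_num)) z)
      (fun z hz => by
        refine le_trans (hlip z (hseg hz)) ?_
        refine mul_le_mul_of_nonneg_left ?_ (le_max_right _ _)
        rw [segment_eq_image'] at hz
        obtain ⟨t, ht, rfl⟩ := hz
        rw [add_sub_cancel_left, norm_smul, Real.norm_eq_abs, abs_of_nonneg ht.1]
        calc t * ‖b - a‖ ≤ 1 * ‖b - a‖ :=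
            mul_le_mul_of_nonneg_right ht.2 (norm_nonneg _)
          _ = ‖b - a‖ := one_mul _)
      (convex_segment a b) (left_mem_segment ℝ a b) (right_mem_segment ℝ a b)
    rw [Real.norm_eq_abs] at key
    calc |W b - W a - (fderiv ℝ W a) (b - a)| ≤ max L0 0 * ‖b - a‖ * ‖b - a‖ := key
      _ = max L0 0 * (‖b - a‖ * ‖b - a‖) := by ring

end anal

section glue
variable {V A : Type*} [Fintype V] [DecidableEq V] [Fintype A] [DecidableEq A]
variable {E : Finset (V × V)} {ρ : ℝ} {P : A → A → ℝ} {φ : A → A → A → ℝ}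

lemma pinTrans_rowsum (x : V → A) : ∑ y : V → A, pinTrans E ρ P φ x y = 1 := by
  classical
  have split : ∀ y, pinTrans E ρ P φ x y
      = (if x = y then (1 - ∑ z : V → A, Toff E ρ P φ x z) - Toff E ρ P φ x y else 0)
        + Toff E ρ P φ x y := by
    intro y; by_cases h : x = y
    · rw [pinTrans, if_pos h, if_pos h]; ring
    · rw [pinTrans, if_neg h, if_neg h]; ring
  rw [Finset.sum_congr rfl fun y _ => split y, Finset.sum_add_distrib, Finset.sum_ite_eq,
    if_pos (Finset.mem_univ x), Toff_self]
  ring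

lemma wgt_nonneg (hρ0 : 0 ≤ ρ) (hρ1 : ρ ≤ 1) (hP0 : ∀ i j, 0 ≤ P i j)
    (hφ0 : ∀ i j ℓ, 0 ≤ φ i j ℓ) (x : V → A) (u : V) (j : A) :
    0 ≤ wgt E ρ P φ x u j := by
  refine add_nonneg (mul_nonneg (mul_nonneg (by linarith) (by positivity)) (hP0 _ _)) ?_
  exact mul_nonneg (div_nonneg hρ0 (Nat.cast_nonneg _))
    (Finset.sum_nonneg fun e _ => hφ0 _ _ _)

lemma wgt_total (hn : 0 < Fintype.card V) (hm : 0 < E.card)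
    (hP : ∀ a, ∑ j, P a j = 1) (hφ : ∀ a ℓ, ∑ j, φ a j ℓ = 1) (x : V → A) :
    ∑ u : V, ∑ j : A, wgt E ρ P φ x u j = 1 := by
  have hN : (Fintype.card V : ℝ) ≠ 0 := by positivity
  have hM : ((E.card : ℕ) : ℝ) ≠ 0 := by
    simp only [ne_eq, Nat.cast_eq_zero]; omega
  rw [Finset.sum_congr rfl fun u _ => wgt_rowsum hP hφ x u, Finset.sum_add_distrib,
    Finset.sum_const, ← Finset.mul_sum]
  have hdeg : ∑ u : V, ((E.filter fun e => e.1 = u).card : ℝ) = (E.card : ℝ) := by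
    rw [← Nat.cast_sum]
    norm_cast
    exact (Finset.card_eq_sum_card_fiberwise (f := Prod.fst) (s := E) (t := univ)
      (fun e _ => Finset.mem_univ _)).symm
  rw [hdeg, nsmul_eq_mul, Finset.card_univ]
  field_simp
  ring

end glue

section pointwise
variable {V A : Type*} [Fintype V] [DecidableEq V] [Fintype A] [DecidableEq A] [Nonempty A]
variable {ρ : ℝ} {P : A → A → ℝ} {φ : A → A → A → ℝ}

lemma pointwise_bound (W : (A → ℝ) → ℝ) {M L : ℝ} (hM0 : 0 ≤ M) (hL0 : 0 ≤ L)
    (hMb : ∀ θ ∈ Metric.closedBall (0 : A → ℝ) 1, ‖fderiv ℝ W θ‖ ≤ M)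
    (hTay : ∀ a b : A → ℝ, a ∈ Metric.closedBall (0 : A → ℝ) 1 →
      b ∈ Metric.closedBall (0 : A → ℝ) 1 →
      |W b - W a - fderiv ℝ W a (b - a)| ≤ L * (‖b - a‖ * ‖b - a‖))
    (hn : 2 ≤ Fintype.card V)
    (hρ0 : 0 ≤ ρ) (hρ1 : ρ ≤ 1) (hP0 : ∀ i j, 0 ≤ P i j) (hP1 : ∀ a, ∑ j, P a j = 1)
    (hφ0 : ∀ i j ℓ, 0 ≤ φ i j ℓ) (hφ1 : ∀ a ℓ, ∑ j, φ a j ℓ = 1) (x : V → A) :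
    ∑ y : V → A, pinTrans ((univ : Finset (V × V)).filter fun e : V × V => e.1 ≠ e.2) ρ P φ x y
        * (W (confType y) - W (confType x))
    ≤ (1 / (Fintype.card V : ℝ)) * fderiv ℝ W (confType x) (limitDrift ρ P φ (confType x))
      + (L + 4 * M * (Fintype.card A : ℝ)^2) / ((Fintype.card V : ℝ) * (Fintype.card V : ℝ)) := by
  classical
  set E : Finset (V × V) := (univ : Finset (V × V)).filter fun e : V × V => e.1 ≠ e.2 with hEdef
  have hncard : 0 < Fintype.card V := lt_of_lt_of_le (by norm_num) hn
  have hN2 : (2 : ℝ) ≤ (Fintype.card V : ℝ) := by exact_mod_cast hn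
  set N := (Fintype.card V : ℝ) with hNdef
  have hN0 : (0 : ℝ) < N := by linarith
  have hmR : ((E.card : ℕ) : ℝ) = N * N - N := cardE_complete'
  have hm : 0 < E.card := by
    have h : (0:ℝ) < ((E.card : ℕ) : ℝ) := by rw [hmR]; nlinarith
    exact_mod_cast h
  set a : A → ℝ := confType x with ha
  have haball : a ∈ Metric.closedBall (0 : A → ℝ) 1 :=
    simplex_mem_ball (confType_simplex hncard x)
  set F := fderiv ℝ W a with hF
  set b : V → A → (A → ℝ) := fun u j => confType (Function.update x u j) with hb
  have hbball : ∀ u j, b u j ∈ Metric.closedBall (0 : A → ℝ) 1 :=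
    fun u j => simplex_mem_ball (confType_simplex hncard _)
  -- replace pinTrans by Toff, then reindex
  have step1 : ∑ y : V → A, pinTrans E ρ P φ x y * (W (confType y) - W (confType x))
      = ∑ y : V → A, Toff E ρ P φ x y * (W (confType y) - W (confType x)) := by
    refine Finset.sum_congr rfl fun y _ => ?_
    by_cases h : x = y
    · subst h; rw [sub_self, mul_zero, mul_zero]
    · rw [pinTrans, if_neg h]
  have step2 : ∑ y : V → A, Toff E ρ P φ x y * (W (confType y) - W (confType x))
      = ∑ u : V, ∑ j : A, wgt E ρ P φ x u j * (W (b u j) - W a) :=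
    offdiag_sum x (fun y => W (confType y) - W (confType x)) (sub_self _)
  -- norm of type increments
  have hbdiff : ∀ u j, ‖b u j - a‖ ≤ 1 / N := by
    intro u j
    rw [pi_norm_le_iff_of_nonneg (by positivity)]
    intro i
    rw [Pi.sub_apply, Real.norm_eq_abs]
    have hbi : b u j i = confType (Function.update x u j) i := rfl
    rw [hbi, ha, confType_update hncard x u j i, ← hNdef]
    have heq : confType x i + ((if j = i then (1:ℝ) else 0) - (if x u = i then 1 else 0)) / N
        - confType x i = ((if j = i then (1:ℝ) else 0) - (if x u = i then 1 else 0)) / N := by ring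
    rw [heq, abs_div, abs_of_pos hN0]
    gcongr
    split_ifs <;> norm_num
  -- Taylor remainder bound per transition
  have hr : ∀ u j, |W (b u j) - W a - F (b u j - a)| ≤ L / (N * N) := by
    intro u j
    refine (hTay a (b u j) haball (hbball u j)).trans ?_
    have h1 : ‖b u j - a‖ * ‖b u j - a‖ ≤ (1/N) * (1/N) :=
      mul_le_mul (hbdiff u j) (hbdiff u j) (norm_nonneg _) (by positivity)
    calc L * (‖b u j - a‖ * ‖b u j - a‖) ≤ L * ((1/N) * (1/N)) :=
          mul_le_mul_of_nonneg_left h1 hL0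
      _ = L / (N * N) := by field_simp
  -- split linear + remainder
  have decomp : ∑ u : V, ∑ j : A, wgt E ρ P φ x u j * (W (b u j) - W a)
      = (∑ u : V, ∑ j : A, wgt E ρ P φ x u j * F (b u j - a))
        + ∑ u : V, ∑ j : A, wgt E ρ P φ x u j * ((W (b u j) - W a) - F (b u j - a)) := by
    rw [← Finset.sum_add_distrib]
    refine Finset.sum_congr rfl fun u _ => ?_
    rw [← Finset.sum_add_distrib]
    exact Finset.sum_congr rfl fun j _ => by ring
  -- remainder sum bound
  have hw0 : ∀ u j, 0 ≤ wgt E ρ P φ x u j := fun u j => wgt_nonneg hρ0 hρ1 hP0 hφ0 x u j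
  have hR : |∑ u : V, ∑ j : A, wgt E ρ P φ x u j * ((W (b u j) - W a) - F (b u j - a))|
      ≤ L / (N * N) := by
    calc |∑ u : V, ∑ j : A, wgt E ρ P φ x u j * ((W (b u j) - W a) - F (b u j - a))|
        ≤ ∑ u : V, ∑ j : A, |wgt E ρ P φ x u j * ((W (b u j) - W a) - F (b u j - a))| := by
          refine (Finset.abs_sum_le_sum_abs _ _).trans ?_
          exact Finset.sum_le_sum fun u _ => Finset.abs_sum_le_sum_abs _ _
      _ ≤ ∑ u : V, ∑ j : A, wgt E ρ P φ x u j * (L / (N * N)) := by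
          refine Finset.sum_le_sum fun u _ => Finset.sum_le_sum fun j _ => ?_
          rw [abs_mul, abs_of_nonneg (hw0 u j)]
          exact mul_le_mul_of_nonneg_left (hr u j) (hw0 u j)
      _ = (∑ u : V, ∑ j : A, wgt E ρ P φ x u j) * (L / (N * N)) := by
          rw [Finset.sum_mul]
          exact Finset.sum_congr rfl fun u _ => by rw [Finset.sum_mul]
      _ = L / (N * N) := by rw [wgt_total hncard hm hP1 hφ1 x, one_mul]
  -- linear part
  have lin : ∑ u : V, ∑ j : A, wgt E ρ P φ x u j * F (b u j - a)
      = (1 / N) * F (fun i => driftVec E ρ P φ x i) := by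
    have l1 : ∑ u : V, ∑ j : A, wgt E ρ P φ x u j * F (b u j - a)
        = F (∑ u : V, ∑ j : A, wgt E ρ P φ x u j • (b u j - a)) := by
      rw [map_sum]
      refine Finset.sum_congr rfl fun u _ => ?_
      rw [map_sum]
      refine Finset.sum_congr rfl fun j _ => ?_
      rw [map_smul, smul_eq_mul]
    have l2 : (∑ u : V, ∑ j : A, wgt E ρ P φ x u j • (b u j - a))
        = (1 / N) • (fun i => driftVec E ρ P φ x i) := by
      funext i
      rw [Finset.sum_apply]
      have : ∀ u : V, (∑ j : A, wgt E ρ P φ x u j • (b u j - a)) i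
          = ∑ j : A, wgt E ρ P φ x u j * ((b u j) i - a i) := by
        intro u
        rw [Finset.sum_apply]
        exact Finset.sum_congr rfl fun j _ => by
          rw [Pi.smul_apply, Pi.sub_apply, smul_eq_mul]
      rw [Finset.sum_congr rfl fun u _ => this u]
      rw [drift_formula hncard hm hP1 hφ1 x i]
      rw [Pi.smul_apply, smul_eq_mul]
      ring
    rw [l1, l2, map_smul, smul_eq_mul]
  -- drift comparison
  have hdc : |F (fun i => driftVec E ρ P φ x i) - F (limitDrift ρ P φ a)|
      ≤ M * (4 * (Fintype.card A : ℝ)^2 / N) := by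
    rw [← map_sub]
    calc |F ((fun i => driftVec E ρ P φ x i) - limitDrift ρ P φ a)|
        ≤ ‖F‖ * ‖(fun i => driftVec E ρ P φ x i) - limitDrift ρ P φ a‖ :=
          F.le_opNorm _
      _ ≤ M * (4 * (Fintype.card A : ℝ)^2 / N) := by
          refine mul_le_mul (hMb a haball) ?_ (norm_nonneg _) hM0
          rw [pi_norm_le_iff_of_nonneg (by positivity)]
          intro i
          rw [Pi.sub_apply, Real.norm_eq_abs]
          exact drift_close hn hρ0 hρ1 hφ0 hφ1 x i
  -- assemble
  rw [step1, step2, decomp, lin]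
  have h1 : F (fun i => driftVec E ρ P φ x i)
      ≤ F (limitDrift ρ P φ a) + M * (4 * (Fintype.card A : ℝ)^2 / N) := by
    have := abs_le.mp hdc
    linarith [this.2]
  have h2 : ∑ u : V, ∑ j : A, wgt E ρ P φ x u j * ((W (b u j) - W a) - F (b u j - a))
      ≤ L / (N * N) := by
    have := abs_le.mp hR
    linarith [this.2]
  have h3 : (1 / N) * F (fun i => driftVec E ρ P φ x i)
      ≤ (1 / N) * F (limitDrift ρ P φ a) + 4 * M * (Fintype.card A : ℝ)^2 / (N * N) := by
    have hmul := mul_le_mul_of_nonneg_left h1 (le_of_lt (by positivity : (0:ℝ) < 1 / N))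
    have heq : (1 / N) * (F (limitDrift ρ P φ a) + M * (4 * (Fintype.card A : ℝ)^2 / N))
        = (1 / N) * F (limitDrift ρ P φ a) + 4 * M * (Fintype.card A : ℝ)^2 / (N * N) := by
      field_simp
    linarith [heq ▸ hmul]
  have hsplit : (L + 4 * M * (Fintype.card A : ℝ)^2) / (N * N)
      = L / (N * N) + 4 * M * (Fintype.card A : ℝ)^2 / (N * N) := by ring
  linarith

end pointwise

/-- Corollary: concentration for mean-field (complete-graph) PIN models.
If `V` is `C²` and `∇V(θ)·D̄(θ) ≤ 0` on the simplex, then, for a constant `C > 0`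
depending only on `V`, every stationary distribution of a PIN model on the complete
graph with `n ≥ 2` nodes satisfies `μ({x : ∇V(θ(x))·D̄(θ(x)) > −δ}) ≥ 1 − C/(nδ)`. -/
theorem concentration_complete_graph {A : Type*} [Fintype A] [DecidableEq A] [Nonempty A]
    (W : (A → ℝ) → ℝ) (hW : ContDiff ℝ 2 W) :
    ∃ C > (0 : ℝ), ∀ (V : Type) [Fintype V] [DecidableEq V],
      ∀ (E : Finset (V × V)), E = Finset.univ.filter (fun e : V × V => e.1 ≠ e.2) →
      2 ≤ Fintype.card V →
      ∀ (ρ : ℝ) (P : A → A → ℝ) (φ : A → A → A → ℝ), IsPinModel E ρ P φ →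
      ∀ (μ : (V → A) → ℝ), IsStationaryPIN E ρ P φ μ →
      (∀ θ : A → ℝ, inSimplex θ → fderiv ℝ W θ (limitDrift ρ P φ θ) ≤ 0) →
      ∀ δ > (0 : ℝ),
        massOf μ (fun x =>
            fderiv ℝ W (confType x) (limitDrift ρ P φ (confType x)) > -δ) ≥
          1 - C / ((Fintype.card V : ℝ) * δ) := by
  classical
  obtain ⟨M, L, hM0, hL0, hMb, hTay⟩ := exists_bounds W hW
  set C₁ : ℝ := L + 4 * M * (Fintype.card A : ℝ)^2 with hC₁
  have hC₁0 : 0 ≤ C₁ := by positivity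
  refine ⟨C₁ + 1, by positivity, ?_⟩
  intro V _ _ E hE hn ρ P φ hPin μ hμ hLyap δ hδ
  subst hE
  obtain ⟨hρ0, hρ1, hP0, hP1, hφ0, hφ1, hEne, -⟩ := hPin
  obtain ⟨hμ0, hμ1, hμs⟩ := hμ
  have hncard : 0 < Fintype.card V := lt_of_lt_of_le (by norm_num) hn
  have hN2 : (2 : ℝ) ≤ (Fintype.card V : ℝ) := by exact_mod_cast hn
  set N := (Fintype.card V : ℝ) with hNdef
  have hN0 : (0 : ℝ) < N := by linarith
  set E : Finset (V × V) := (univ : Finset (V × V)).filter fun e : V × V => e.1 ≠ e.2 with hEdef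
  set g : (V → A) → ℝ :=
    fun x => fderiv ℝ W (confType x) (limitDrift ρ P φ (confType x)) with hg
  have hgle : ∀ x : V → A, g x ≤ 0 := fun x => hLyap _ (confType_simplex hncard x)
  -- Step A : stationarity makes the expected increment vanish
  have hzero : ∑ x : V → A, μ x *
      (∑ y : V → A, pinTrans E ρ P φ x y * (W (confType y) - W (confType x))) = 0 := by
    have hexp : ∀ x : V → A,
        ∑ y : V → A, pinTrans E ρ P φ x y * (W (confType y) - W (confType x))
        = (∑ y : V → A, pinTrans E ρ P φ x y * W (confType y)) - W (confType x) := by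
      intro x
      simp only [mul_sub]
      rw [Finset.sum_sub_distrib, ← Finset.sum_mul, pinTrans_rowsum, one_mul]
    rw [Finset.sum_congr rfl fun x _ => by rw [hexp x, mul_sub]]
    rw [Finset.sum_sub_distrib]
    have h1 : ∑ x : V → A, μ x * ∑ y : V → A, pinTrans E ρ P φ x y * W (confType y)
        = ∑ x : V → A, μ x * W (confType x) := by
      calc ∑ x : V → A, μ x * ∑ y : V → A, pinTrans E ρ P φ x y * W (confType y)
          = ∑ x : V → A, ∑ y : V → A, μ x * pinTrans E ρ P φ x y * W (confType y) := by
            refine Finset.sum_congr rfl fun x _ => ?_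
            rw [Finset.mul_sum]
            exact Finset.sum_congr rfl fun y _ => by ring
        _ = ∑ y : V → A, ∑ x : V → A, μ x * pinTrans E ρ P φ x y * W (confType y) :=
            Finset.sum_comm
        _ = ∑ y : V → A, μ y * W (confType y) := by
            refine Finset.sum_congr rfl fun y _ => ?_
            rw [← Finset.sum_mul, hμs y]
    rw [h1, sub_self]
  -- Step B/C : bound the mean of -g
  have hmean : ∑ x : V → A, μ x * (- g x) ≤ C₁ / N := by
    have lower : ∀ x : V → A,
        μ x * (∑ y : V → A, pinTrans E ρ P φ x y * (W (confType y) - W (confType x)))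
        ≤ μ x * ((1 / N) * g x + C₁ / (N * N)) := fun x =>
      mul_le_mul_of_nonneg_left
        (pointwise_bound W hM0 hL0 hMb hTay hn hρ0 hρ1 hP0 hP1 hφ0 hφ1 x) (hμ0 x)
    have hle : 0 ≤ ∑ x : V → A, μ x * ((1 / N) * g x + C₁ / (N * N)) := by
      rw [← hzero]
      exact Finset.sum_le_sum fun x _ => lower x
    have hexpand : ∑ x : V → A, μ x * ((1 / N) * g x + C₁ / (N * N))
        = (1 / N) * (∑ x : V → A, μ x * g x) + C₁ / (N * N) := by
      calc ∑ x : V → A, μ x * ((1 / N) * g x + C₁ / (N * N))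
          = ∑ x : V → A, ((1 / N) * (μ x * g x) + μ x * (C₁ / (N * N))) := by
            exact Finset.sum_congr rfl fun x _ => by ring
        _ = (1 / N) * (∑ x : V → A, μ x * g x) + (∑ x : V → A, μ x) * (C₁ / (N * N)) := by
            rw [Finset.sum_add_distrib, ← Finset.mul_sum, ← Finset.sum_mul]
        _ = (1 / N) * (∑ x : V → A, μ x * g x) + C₁ / (N * N) := by rw [hμ1, one_mul]
    rw [hexpand] at hle
    have hS : ∑ x : V → A, μ x * (- g x) = - ∑ x : V → A, μ x * g x := by
      rw [← Finset.sum_neg_distrib]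
      exact Finset.sum_congr rfl fun x _ => by ring
    rw [hS]
    have : - (∑ x : V → A, μ x * g x) ≤ N * (C₁ / (N * N)) := by
      have := mul_le_mul_of_nonneg_left hle (le_of_lt hN0)
      rw [mul_zero] at this
      have h2 : N * ((1 / N) * (∑ x : V → A, μ x * g x) + C₁ / (N * N))
          = (∑ x : V → A, μ x * g x) + N * (C₁ / (N * N)) := by
        field_simp
      linarith [h2 ▸ this]
    have hNC : N * (C₁ / (N * N)) = C₁ / N := by
      field_simp
    linarith [hNC ▸ this]
  -- Step D : Markov
  have hsplit : massOf μ (fun x => g x > -δ)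
      + ∑ x : V → A, (if ¬ (g x > -δ) then μ x else 0) = 1 := by
    rw [massOf, ← Finset.sum_add_distrib, ← hμ1]
    refine Finset.sum_congr rfl fun x _ => ?_
    by_cases h : g x > -δ <;> simp [h]
  have hcomp : ∑ x : V → A, (if ¬ (g x > -δ) then μ x else 0) ≤ C₁ / (N * δ) := by
    have hterm : ∀ x : V → A, (if ¬ (g x > -δ) then μ x else 0) ≤ μ x * (- g x) / δ := by
      intro x
      by_cases h : g x > -δ
      · rw [if_neg (not_not_intro h)]
        have h0 : 0 ≤ - g x := by linarith [hgle x]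
        exact div_nonneg (mul_nonneg (hμ0 x) h0) (le_of_lt hδ)
      · rw [if_pos h]
        push_neg at h
        have hgx : δ ≤ - g x := by linarith
        rw [← sub_nonneg]
        have : μ x * (- g x) / δ - μ x = μ x * ((- g x) - δ) / δ := by field_simp
        rw [this]
        have h1 : 0 ≤ (- g x) - δ := by linarith
        exact div_nonneg (mul_nonneg (hμ0 x) h1) (le_of_lt hδ)
    calc ∑ x : V → A, (if ¬ (g x > -δ) then μ x else 0)
        ≤ ∑ x : V → A, μ x * (- g x) / δ := Finset.sum_le_sum fun x _ => hterm x
      _ = (∑ x : V → A, μ x * (- g x)) / δ := by rw [Finset.sum_div]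
      _ ≤ (C₁ / N) / δ := by gcongr
      _ = C₁ / (N * δ) := by rw [div_div]
  have hmono : C₁ / (N * δ) ≤ (C₁ + 1) / (N * δ) := by
    have hNδ : 0 < N * δ := by positivity
    gcongr
    linarith
  have : massOf μ (fun x => g x > -δ) = 1 - ∑ x : V → A, (if ¬ (g x > -δ) then μ x else 0) := by
    linarith [hsplit]
  rw [this]
  linarith [hcomp, hmono]

end
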